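/- If the series ∑_{n=1}^{∞} b_n converges, then the reflecting birth–death chain is transient: for every starting state i ∈ ℕ, μ_i-almost surely, for every state j ∈ ℕ the set {n ∈ ℕ : ω_n = j} is finite (equivalently, almost surely ω_n → ∞). -/

import Mathlib

open MeasureTheory
open scoped ENNReal

/-- Transition probabilities of the reflecting birth-death chain on `ℕ`:
from `0` move to `1` with probability `1`; for `i ≥ 1`, move to `i+1` with
probability `p i` and to `i-1` with probability `q i`. -/
noncomputable def rfKernel (p q : ℕ → ℝ) : ℕ → ℕ → ℝ := fun i j =>
  if i = 0 then (if j = 1 then 1 else 0)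
  else if j = i + 1 then p i else if j = i - 1 then q i else 0

/-- `μ i` is the law (on path space, obtained via Ionescu–Tulcea) of the reflecting
birth-death chain started at `i`, characterised by its finite-dimensional (cylinder)
distributions. -/
def IsRFLaw (p q : ℕ → ℝ) (μ : ℕ → Measure (ℕ → ℕ)) : Prop :=
  ∀ (i n : ℕ) (f : ℕ → ℕ),
    μ i {ω : ℕ → ℕ | ∀ m ≤ n, ω m = f m} =
      ENNReal.ofReal ((if f 0 = i then (1 : ℝ) else 0) *
        ∏ m ∈ Finset.range n, rfKernel p q (f m) (f (m + 1)))

/-- `bseq p q n = ∏_{i=1}^{n} q_i / p_i` (so `bseq p q 0 = 1`). -/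
noncomputable def bseq (p q : ℕ → ℝ) (n : ℕ) : ℝ :=
  ∏ i ∈ Finset.Icc 1 n, q i / p i

/-! ### Auxiliary definitions -/

/-- Tail sums of `bseq`. -/
noncomputable def Tt (p q : ℕ → ℝ) (x : ℕ) : ℝ := ∑' k : ℕ, bseq p q (k + x)

/-- `n`-step "distribution" (as an `ℝ≥0∞`-valued path sum) of the chain started at `i`. -/
noncomputable def Wk (p q : ℕ → ℝ) (i : ℕ) : ℕ → ℕ → ℝ≥0∞
  | 0, x => if x = i then 1 else 0
  | n+1, y => ∑' x : ℕ, Wk p q i n x * ENNReal.ofReal (rfKernel p q x y)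

/-- Extension of a finite tuple to a function on `ℕ` (by `0`). -/
def extv (n : ℕ) (v : Fin (n+1) → ℕ) (m : ℕ) : ℕ :=
  if h : m < n + 1 then v ⟨m, h⟩ else 0

/-- Weight of a cylinder. -/
noncomputable def cylwt (p q : ℕ → ℝ) (i n : ℕ) (f : ℕ → ℕ) : ℝ :=
  (if f 0 = i then (1 : ℝ) else 0) *
    ∏ m ∈ Finset.range n, rfKernel p q (f m) (f (m + 1))

section Aux

variable {p q : ℕ → ℝ}

lemma Wk_zero (i x : ℕ) : Wk p q i 0 x = if x = i then 1 else 0 := rfl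

lemma Wk_succ (i n y : ℕ) :
    Wk p q i (n+1) y = ∑' x : ℕ, Wk p q i n x * ENNReal.ofReal (rfKernel p q x y) := rfl

lemma bseq_zero : bseq p q 0 = 1 := by simp [bseq]

lemma bseq_succ (x : ℕ) : bseq p q (x+1) = bseq p q x * (q (x+1) / p (x+1)) :=
  Finset.prod_Icc_succ_top (by omega) _

lemma ppos (hp : ∀ i, 1 ≤ i → p i ∈ Set.Ioo (0 : ℝ) 1) (hp0 : p 0 = 1) (j : ℕ) :
    0 < p j := by
  rcases Nat.eq_zero_or_pos j with rfl | hj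
  · rw [hp0]; norm_num
  · exact (hp j hj).1

lemma bpos (hp : ∀ i, 1 ≤ i → p i ∈ Set.Ioo (0 : ℝ) 1)
    (hq : ∀ i, 1 ≤ i → q i ∈ Set.Ioo (0 : ℝ) 1) (m : ℕ) : 0 < bseq p q m := by
  refine Finset.prod_pos fun i hi => ?_
  have h1 : 1 ≤ i := (Finset.mem_Icc.mp hi).1
  exact div_pos (hq i h1).1 (hp i h1).1

lemma keyrel (hp : ∀ i, 1 ≤ i → p i ∈ Set.Ioo (0 : ℝ) 1) (x : ℕ) :
    p (x+1) * bseq p q (x+1) = q (x+1) * bseq p q x := by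
  have hpx : p (x+1) ≠ 0 := ne_of_gt (hp (x+1) (by omega)).1
  rw [bseq_succ]
  field_simp

lemma kernel_nonneg (hp : ∀ i, 1 ≤ i → p i ∈ Set.Ioo (0 : ℝ) 1)
    (hq : ∀ i, 1 ≤ i → q i ∈ Set.Ioo (0 : ℝ) 1) (x y : ℕ) :
    0 ≤ rfKernel p q x y := by
  unfold rfKernel
  split_ifs with h1 h2 h3 h4
  · norm_num
  · norm_num
  · exact (hp x (by omega)).1.le
  · exact (hq x (by omega)).1.le
  · norm_num

lemma cylwt_nonneg (hp : ∀ i, 1 ≤ i → p i ∈ Set.Ioo (0 : ℝ) 1)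
    (hq : ∀ i, 1 ≤ i → q i ∈ Set.Ioo (0 : ℝ) 1) (i n : ℕ) (f : ℕ → ℕ) :
    0 ≤ cylwt p q i n f := by
  refine mul_nonneg ?_ (Finset.prod_nonneg fun m _ => kernel_nonneg hp hq _ _)
  split <;> norm_num

lemma bsummable (hb : Summable (fun n : ℕ => bseq p q (n + 1))) : Summable (bseq p q) :=
  (summable_nat_add_iff 1).mp hb

lemma summable_shift (hb : Summable (fun n : ℕ => bseq p q (n + 1))) (x : ℕ) :
    Summable (fun k : ℕ => bseq p q (k + x)) :=
  (summable_nat_add_iff x).mpr (bsummable hb)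

lemma Tt_succ (hb : Summable (fun n : ℕ => bseq p q (n + 1))) (x : ℕ) :
    Tt p q x = bseq p q x + Tt p q (x+1) := by
  have h := Summable.tsum_eq_zero_add (summable_shift hb x)
  simp only [zero_add] at h
  rw [Tt, h, Tt]
  congr 1
  exact tsum_congr fun k => by congr 1; omega

lemma Tt_nonneg (hp : ∀ i, 1 ≤ i → p i ∈ Set.Ioo (0 : ℝ) 1)
    (hq : ∀ i, 1 ≤ i → q i ∈ Set.Ioo (0 : ℝ) 1) (x : ℕ) : 0 ≤ Tt p q x :=
  tsum_nonneg fun k => (bpos hp hq _).le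

/-- Real superharmonicity of `x ↦ Tt (max x j)` with defect `p j * bseq p q j` at `j`. -/
lemma harmonicR (hp : ∀ i, 1 ≤ i → p i ∈ Set.Ioo (0 : ℝ) 1)
    (hq : ∀ i, 1 ≤ i → q i ∈ Set.Ioo (0 : ℝ) 1)
    (hpq : ∀ i, 1 ≤ i → p i + q i = 1) (hp0 : p 0 = 1)
    (hb : Summable (fun n : ℕ => bseq p q (n + 1))) (j x : ℕ) :
    (if x = 0 then Tt p q (max 1 j) else
      p x * Tt p q (max (x+1) j) + q x * Tt p q (max (x-1) j)) +
      (if x = j then p j * bseq p q j else 0) = Tt p q (max x j) := by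
  rcases Nat.eq_zero_or_pos x with rfl | hx
  · rcases Nat.eq_zero_or_pos j with rfl | hj
    · have hT := Tt_succ hb 0
      rw [bseq_zero] at hT
      rw [if_pos rfl, if_pos rfl, max_eq_left (by omega : (0:ℕ) ≤ 1), max_self, hp0,
        bseq_zero]
      linarith
    · rw [if_pos rfl, if_neg (by omega), max_eq_right hj, max_eq_right (Nat.zero_le j),
        add_zero]
  · obtain ⟨y, rfl⟩ : ∃ y, x = y + 1 := ⟨x - 1, by omega⟩
    rw [if_neg (by omega)]
    have hpqx := hpq (y+1) (by omega)
    simp only [Nat.add_sub_cancel]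
    rcases lt_trichotomy (y+1) j with hlt | rfl | hgt
    · rw [if_neg (by omega), max_eq_right (by omega : y+1+1 ≤ j), max_eq_right (by omega : y+1 ≤ j),
        max_eq_right (by omega : y ≤ j)]
      linear_combination (Tt p q j) * hpqx
    · rw [if_pos rfl]
      rw [max_eq_left (by omega : y+1 ≤ y+1+1), max_self, max_eq_right (by omega : y ≤ y+1)]
      have hT := Tt_succ hb (y+1)
      linear_combination (q (y+1) - 1) * hT + (Tt p q (y+2) + bseq p q (y+1)) * hpqx
    · rw [if_neg (by omega), max_eq_left (by omega : j ≤ y+1+1), max_eq_left (by omega : j ≤ y+1),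
        max_eq_left (by omega : j ≤ y)]
      have h1 := Tt_succ hb y
      have h2 := Tt_succ hb (y+1)
      have hk := keyrel (q := q) hp y
      linear_combination q (y+1) * h1 + (q (y+1) - 1) * h2 - hk +
        (Tt p q (y+2) + bseq p q (y+1)) * hpqx

/-- `ℝ≥0∞` version of superharmonicity. -/
lemma harmonicE (hp : ∀ i, 1 ≤ i → p i ∈ Set.Ioo (0 : ℝ) 1)
    (hq : ∀ i, 1 ≤ i → q i ∈ Set.Ioo (0 : ℝ) 1)
    (hpq : ∀ i, 1 ≤ i → p i + q i = 1) (hp0 : p 0 = 1)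
    (hb : Summable (fun n : ℕ => bseq p q (n + 1))) (j x : ℕ) :
    (∑' y : ℕ, ENNReal.ofReal (rfKernel p q x y) * ENNReal.ofReal (Tt p q (max y j))) +
      (if x = j then ENNReal.ofReal (p j * bseq p q j) else 0) =
      ENNReal.ofReal (Tt p q (max x j)) := by
  have hR := harmonicR hp hq hpq hp0 hb j x
  have hTnn := Tt_nonneg hp hq
  have hsum : (∑' y : ℕ, ENNReal.ofReal (rfKernel p q x y) *
      ENNReal.ofReal (Tt p q (max y j))) =
      ENNReal.ofReal (if x = 0 then Tt p q (max 1 j) else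
        p x * Tt p q (max (x+1) j) + q x * Tt p q (max (x-1) j)) := by
    rcases Nat.eq_zero_or_pos x with rfl | hx
    · rw [if_pos rfl]
      rw [tsum_eq_single 1 (fun y hy => by
        simp [rfKernel, hy])]
      simp [rfKernel]
    · obtain ⟨z, rfl⟩ : ∃ z, x = z + 1 := ⟨x - 1, by omega⟩
      rw [if_neg (by omega)]
      have hzz : (z : ℕ) ≠ z + 2 := by omega
      rw [tsum_eq_sum (s := ({z, z + 2} : Finset ℕ)) (fun y hy => by
        have h1 : y ≠ z := fun h => hy (by simp [h])
        have h2 : y ≠ z + 2 := fun h => hy (by simp [h])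
        have : rfKernel p q (z+1) y = 0 := by
          unfold rfKernel
          rw [if_neg (by omega), if_neg (by omega), if_neg (by simpa using h1)]
        rw [this, ENNReal.ofReal_zero, zero_mul])]
      rw [Finset.sum_pair hzz]
      have hk1 : rfKernel p q (z+1) z = q (z+1) := by
        unfold rfKernel
        rw [if_neg (by omega), if_neg (by omega), if_pos (by omega)]
      have hk2 : rfKernel p q (z+1) (z+2) = p (z+1) := by
        unfold rfKernel
        rw [if_neg (by omega), if_pos rfl]
      rw [hk1, hk2]
      simp only [Nat.add_sub_cancel]
      rw [← ENNReal.ofReal_mul (hq (z+1) (by omega)).1.le,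
        ← ENNReal.ofReal_mul (hp (z+1) (by omega)).1.le,
        ← ENNReal.ofReal_add (mul_nonneg (hq (z+1) (by omega)).1.le (hTnn _))
          (mul_nonneg (hp (z+1) (by omega)).1.le (hTnn _))]
      congr 1
      ring
  rw [hsum]
  have hind : (if x = j then ENNReal.ofReal (p j * bseq p q j) else 0) =
      ENNReal.ofReal (if x = j then p j * bseq p q j else 0) := by
    split <;> simp
  rw [hind, ← ENNReal.ofReal_add ?h1 ?h2, hR]
  case h1 =>
    split
    · exact hTnn _
    · rename_i hx0
      exact add_nonneg (mul_nonneg (hp x (by omega)).1.le (hTnn _))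
        (mul_nonneg (hq x (by omega)).1.le (hTnn _))
  case h2 =>
    split
    · exact (mul_pos (ppos hp hp0 j) (bpos hp hq j)).le
    · exact le_refl 0

/-- The key Green's function bound: total mass of `Wk · j` is finite. -/
lemma sumWk (hp : ∀ i, 1 ≤ i → p i ∈ Set.Ioo (0 : ℝ) 1)
    (hq : ∀ i, 1 ≤ i → q i ∈ Set.Ioo (0 : ℝ) 1)
    (hpq : ∀ i, 1 ≤ i → p i + q i = 1) (hp0 : p 0 = 1)
    (hb : Summable (fun n : ℕ => bseq p q (n + 1))) (i j : ℕ) :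
    ∑' n : ℕ, Wk p q i n j ≤
      ENNReal.ofReal (Tt p q (max i j)) / ENNReal.ofReal (p j * bseq p q j) := by
  set c : ℝ≥0∞ := ENNReal.ofReal (p j * bseq p q j) with hc
  have hcpos : 0 < c := ENNReal.ofReal_pos.mpr (mul_pos (ppos hp hp0 j) (bpos hp hq j))
  set Φ : ℕ → ℝ≥0∞ := fun n => ∑' x : ℕ, Wk p q i n x * ENNReal.ofReal (Tt p q (max x j))
    with hΦ
  have hstep : ∀ n, Φ n = Φ (n+1) + Wk p q i n j * c := by
    intro n
    have h1 : Φ (n+1) = ∑' x : ℕ, Wk p q i n x *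
        ∑' y : ℕ, ENNReal.ofReal (rfKernel p q x y) * ENNReal.ofReal (Tt p q (max y j)) := by
      simp only [hΦ, Wk_succ]
      calc ∑' y : ℕ, (∑' x : ℕ, Wk p q i n x * ENNReal.ofReal (rfKernel p q x y)) *
            ENNReal.ofReal (Tt p q (max y j))
          = ∑' y : ℕ, ∑' x : ℕ, Wk p q i n x * ENNReal.ofReal (rfKernel p q x y) *
            ENNReal.ofReal (Tt p q (max y j)) :=
            tsum_congr fun y => ENNReal.tsum_mul_right.symm
        _ = ∑' x : ℕ, ∑' y : ℕ, Wk p q i n x * ENNReal.ofReal (rfKernel p q x y) *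
            ENNReal.ofReal (Tt p q (max y j)) := ENNReal.tsum_comm
        _ = ∑' x : ℕ, Wk p q i n x * ∑' y : ℕ, ENNReal.ofReal (rfKernel p q x y) *
            ENNReal.ofReal (Tt p q (max y j)) := tsum_congr fun x => by
              rw [← ENNReal.tsum_mul_left]
              exact tsum_congr fun y => mul_assoc _ _ _
    have h2 : (∑' x : ℕ, Wk p q i n x * (if x = j then c else 0)) = Wk p q i n j * c := by
      rw [tsum_eq_single j (fun x hx => by rw [if_neg hx, mul_zero]), if_pos rfl]
    rw [h1, ← h2, ← ENNReal.tsum_add]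
    simp only [hΦ]
    exact (tsum_congr fun x => by
      rw [← mul_add]
      congr 1
      exact harmonicE hp hq hpq hp0 hb j x).symm
  have hΦ0 : Φ 0 = ENNReal.ofReal (Tt p q (max i j)) := by
    simp only [hΦ]
    rw [tsum_eq_single i (fun x hx => by
      simp only [Wk_zero, if_neg hx, zero_mul])]
    simp [Wk_zero]
  have htel : ∀ N, Φ N + ∑ n ∈ Finset.range N, Wk p q i n j * c = Φ 0 := by
    intro N
    induction N with
    | zero => simp
    | succ N ih =>
      rw [Finset.sum_range_succ, ← ih, hstep N]
      ring
  have hbound : ∀ N, ∑ n ∈ Finset.range N, Wk p q i n j * c ≤ Φ 0 := by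
    intro N
    calc ∑ n ∈ Finset.range N, Wk p q i n j * c
        ≤ Φ N + ∑ n ∈ Finset.range N, Wk p q i n j * c := le_add_self
      _ = Φ 0 := htel N
  rw [ENNReal.le_div_iff_mul_le (Or.inl hcpos.ne') (Or.inl ENNReal.ofReal_ne_top), ← hΦ0,
    ← ENNReal.tsum_mul_right]
  exact ENNReal.tsum_le_of_sum_range_le hbound

lemma extv_lt (n : ℕ) (v : Fin (n+1) → ℕ) (m : ℕ) (h : m < n + 1) :
    extv n v m = v ⟨m, h⟩ := dif_pos h

lemma extv_last (n : ℕ) (v : Fin (n+1) → ℕ) : extv n v n = v (Fin.last n) := by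
  rw [extv_lt n v n (by omega)]
  rfl

lemma extv_snoc_le (n : ℕ) (u : Fin (n+1) → ℕ) (x m : ℕ) (h : m ≤ n) :
    extv (n+1) (Fin.snoc u x) m = extv n u m := by
  have h1 : m < n + 2 := by omega
  have h2 : m < n + 1 := by omega
  rw [extv_lt _ _ _ h1, extv_lt _ _ _ h2]
  have he : (⟨m, h1⟩ : Fin (n+2)) = Fin.castSucc ⟨m, h2⟩ := by ext; rfl
  rw [he, Fin.snoc_castSucc]

lemma extv_snoc_last (n : ℕ) (u : Fin (n+1) → ℕ) (x : ℕ) :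
    extv (n+1) (Fin.snoc u x) (n+1) = x := by
  rw [extv_lt _ _ _ (by omega)]
  have he : (⟨n+1, by omega⟩ : Fin (n+2)) = Fin.last (n+1) := by ext; rfl
  rw [he, Fin.snoc_last]

lemma cylwt_snoc (i n : ℕ) (u : Fin (n+1) → ℕ) (x : ℕ) :
    cylwt p q i (n+1) (extv (n+1) (Fin.snoc u x)) =
      cylwt p q i n (extv n u) * rfKernel p q (extv n u n) x := by
  unfold cylwt
  rw [Finset.prod_range_succ]
  rw [extv_snoc_le n u x 0 (by omega), extv_snoc_le n u x n (by omega),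
    extv_snoc_last n u x]
  rw [Finset.prod_congr rfl (fun m hm => by
    have hm' := Finset.mem_range.mp hm
    rw [extv_snoc_le n u x m (by omega), extv_snoc_le n u x (m+1) (by omega)])]
  ring

/-- The path-sum identity: summing cylinder weights over all paths ending at `j` gives `Wk`. -/
lemma pathsum (hp : ∀ i, 1 ≤ i → p i ∈ Set.Ioo (0 : ℝ) 1)
    (hq : ∀ i, 1 ≤ i → q i ∈ Set.Ioo (0 : ℝ) 1) (i : ℕ) :
    ∀ n j, (∑' v : Fin (n+1) → ℕ,
      if v (Fin.last n) = j then ENNReal.ofReal (cylwt p q i n (extv n v)) else 0) =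
      Wk p q i n j := by
  intro n
  induction n with
  | zero =>
    intro j
    rw [← (Equiv.funUnique (Fin 1) ℕ).symm.tsum_eq]
    have hterm : ∀ x : ℕ,
        (if ((Equiv.funUnique (Fin 1) ℕ).symm x) (Fin.last 0) = j then
          ENNReal.ofReal (cylwt p q i 0 (extv 0 ((Equiv.funUnique (Fin 1) ℕ).symm x))) else 0) =
        if x = j then (if j = i then (1 : ℝ≥0∞) else 0) else 0 := by
      intro x
      have h1 : ((Equiv.funUnique (Fin 1) ℕ).symm x) (Fin.last 0) = x := rfl
      have h2 : extv 0 ((Equiv.funUnique (Fin 1) ℕ).symm x) 0 = x := rfl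
      rw [h1]
      split
      · rename_i hxj
        subst hxj
        unfold cylwt
        rw [h2]
        simp only [Finset.range_zero, Finset.prod_empty, mul_one]
        split <;> simp
      · rfl
    rw [tsum_congr hterm, tsum_eq_single j (fun x hx => if_neg hx), if_pos rfl, Wk_zero]
  | succ n IH =>
    intro j
    rw [← (Fin.snocEquiv (fun _ : Fin (n+2) => ℕ)).tsum_eq, ENNReal.tsum_prod']
    have hterm : ∀ (x : ℕ) (u : Fin (n+1) → ℕ),
        (if (Fin.snocEquiv (fun _ : Fin (n+2) => ℕ) (x, u)) (Fin.last (n+1)) = j then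
          ENNReal.ofReal (cylwt p q i (n+1)
            (extv (n+1) (Fin.snocEquiv (fun _ : Fin (n+2) => ℕ) (x, u)))) else 0) =
        if x = j then ENNReal.ofReal (cylwt p q i (n+1) (extv (n+1) (Fin.snoc u x))) else 0 := by
      intro x u
      have he : (Fin.snocEquiv (fun _ : Fin (n+2) => ℕ) (x, u)) = Fin.snoc u x := by
        funext t
        simp [Fin.snocEquiv]
      rw [he, Fin.snoc_last]
    simp only [hterm]
    rw [tsum_eq_single j (fun x hx => by rw [tsum_congr fun u => if_neg hx, tsum_zero])]
    simp only [if_true, ite_true, eq_self_iff_true]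
    have hcyl : ∀ u : Fin (n+1) → ℕ,
        ENNReal.ofReal (cylwt p q i (n+1) (extv (n+1) (Fin.snoc u j))) =
        ENNReal.ofReal (cylwt p q i n (extv n u)) *
          ENNReal.ofReal (rfKernel p q (extv n u n) j) := by
      intro u
      rw [cylwt_snoc, ENNReal.ofReal_mul (cylwt_nonneg hp hq i n _)]
    rw [tsum_congr hcyl]
    have hins : ∀ u : Fin (n+1) → ℕ,
        ENNReal.ofReal (cylwt p q i n (extv n u)) *
          ENNReal.ofReal (rfKernel p q (extv n u n) j) =
        ∑' x : ℕ, (if extv n u n = x then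
          ENNReal.ofReal (cylwt p q i n (extv n u)) * ENNReal.ofReal (rfKernel p q x j)
          else 0) := by
      intro u
      rw [tsum_eq_single (extv n u n) (fun x hx => if_neg fun h => hx h.symm), if_pos rfl]
    rw [tsum_congr hins, ENNReal.tsum_comm]
    rw [Wk_succ]
    congr 1
    ext x
    have : ∀ u : Fin (n+1) → ℕ,
        (if extv n u n = x then
          ENNReal.ofReal (cylwt p q i n (extv n u)) * ENNReal.ofReal (rfKernel p q x j)
          else 0) =
        (if u (Fin.last n) = x then ENNReal.ofReal (cylwt p q i n (extv n u)) else 0) *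
          ENNReal.ofReal (rfKernel p q x j) := by
      intro u
      rw [extv_last, ite_mul, zero_mul]
    rw [tsum_congr this, ENNReal.tsum_mul_right, IH x]

end Aux

theorem stmt7 (p q : ℕ → ℝ)
    (hp : ∀ i, 1 ≤ i → p i ∈ Set.Ioo (0 : ℝ) 1) (hq : ∀ i, 1 ≤ i → q i ∈ Set.Ioo (0 : ℝ) 1)
    (hpq : ∀ i, 1 ≤ i → p i + q i = 1) (hp0 : p 0 = 1)
    (μ : ℕ → Measure (ℕ → ℕ)) (hμ : ∀ i, IsProbabilityMeasure (μ i))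
    (hlaw : IsRFLaw p q μ)
    (hb : Summable (fun n : ℕ => bseq p q (n + 1))) :
    ∀ i : ℕ, μ i {ω : ℕ → ℕ | ∀ j : ℕ, {n : ℕ | ω n = j}.Finite} = 1 := by
  intro i
  haveI := hμ i
  -- Step 1: the measure of `{ω | ω n = j}` is at most `Wk p q i n j`.
  have mub : ∀ n j : ℕ, μ i {ω : ℕ → ℕ | ω n = j} ≤ Wk p q i n j := by
    intro n j
    have cover : {ω : ℕ → ℕ | ω n = j} ⊆ ⋃ v : Fin (n+1) → ℕ,
        (if v (Fin.last n) = j then {ω : ℕ → ℕ | ∀ m ≤ n, ω m = extv n v m} else ∅) := by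
      intro ω hω
      refine Set.mem_iUnion.mpr ⟨fun m : Fin (n+1) => ω m, ?_⟩
      have hv : (fun m : Fin (n+1) => ω ↑m) (Fin.last n) = j := hω
      rw [if_pos hv]
      intro m hm
      rw [extv_lt n _ m (by omega)]
    calc μ i {ω : ℕ → ℕ | ω n = j}
        ≤ ∑' v : Fin (n+1) → ℕ, μ i
          (if v (Fin.last n) = j then {ω : ℕ → ℕ | ∀ m ≤ n, ω m = extv n v m} else ∅) :=
          (measure_mono cover).trans (measure_iUnion_le _)
      _ = ∑' v : Fin (n+1) → ℕ,
          (if v (Fin.last n) = j then ENNReal.ofReal (cylwt p q i n (extv n v)) else 0) := by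
          refine tsum_congr fun v => ?_
          split
          · exact hlaw i n (extv n v)
          · exact measure_empty
      _ = Wk p q i n j := pathsum hp hq i n j
  -- Step 2: Borel-Cantelli for each state `j`.
  have key0 : ∀ j : ℕ, μ i {ω : ℕ → ℕ | {n : ℕ | ω n = j}.Infinite} = 0 := by
    intro j
    have hG : ∑' n : ℕ, μ i {ω : ℕ → ℕ | ω n = j} ≠ ∞ := by
      refine ne_top_of_le_ne_top ?_ (ENNReal.tsum_le_tsum fun n => mub n j)
      refine ne_top_of_le_ne_top ?_ (sumWk hp hq hpq hp0 hb i j)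
      exact (ENNReal.div_lt_top ENNReal.ofReal_ne_top
        (ENNReal.ofReal_pos.mpr (mul_pos (ppos hp hp0 j) (bpos hp hq j))).ne').ne
    have hBC := measure_setOf_frequently_eq_zero (μ := μ i)
      (p := fun n ω => ω n = j) hG
    refine measure_mono_null ?_ hBC
    intro ω hω
    exact Nat.frequently_atTop_iff_infinite.mpr hω
  -- Step 3: assemble.
  have hcompl : μ i {ω : ℕ → ℕ | ∀ j : ℕ, {n : ℕ | ω n = j}.Finite}ᶜ = 0 := by
    refine measure_mono_null ?_ (measure_iUnion_null key0)
    intro ω hω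
    simp only [Set.mem_compl_iff, Set.mem_setOf_eq, not_forall] at hω
    obtain ⟨j, hj⟩ := hω
    exact Set.mem_iUnion.mpr ⟨j, hj⟩
  have h1 : (1 : ℝ≥0∞) ≤ μ i {ω : ℕ → ℕ | ∀ j : ℕ, {n : ℕ | ω n = j}.Finite} := by
    have := measure_union_le (μ := μ i)
      {ω : ℕ → ℕ | ∀ j : ℕ, {n : ℕ | ω n = j}.Finite}
      {ω : ℕ → ℕ | ∀ j : ℕ, {n : ℕ | ω n = j}.Finite}ᶜ
    rw [Set.union_compl_self, measure_univ, hcompl, add_zero] at this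
    exact this
  exact le_antisymm prob_le_one h1
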